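/- For every n ≥ 1, every profile x ∈ [0,1]^n, and every facility location y* ∈ [0,1] that maximizes the egalitarian welfare (i.e., min_i |y* − x_i| ≥ min_i |z − x_i| for all z ∈ [0,1]), y* satisfies 2-IFS: |y* − x_i| ≥ 1/(2n) for every agent i. Consequently, the price of 2-IFS for egalitarian welfare is 1. -/

import Mathlib

lemma round_eq_of_close {r : ℝ} {k : ℤ} (h : |r - k| < 1/2) : round r = k := by
  rw [round_eq]
  rw [abs_sub_lt_iff] at h
  have h1 : (k:ℝ) ≤ r + 1/2 := by linarith [h.2]
  have h2 : r + 1/2 < k + 1 := by linarith [h.1]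
  exact Int.floor_eq_iff.mpr ⟨h1, h2⟩

/-- Any facility location maximizing egalitarian welfare satisfies 2-IFS;
hence the price of 2-IFS for egalitarian welfare is 1. -/
theorem egal_optimal_satisfies_two_IFS :
    ∀ (n : ℕ) (x : Fin n → ℝ), 1 ≤ n → (∀ i, x i ∈ Set.Icc (0:ℝ) 1) →
      ∀ y ∈ Set.Icc (0:ℝ) 1,
        (∀ z ∈ Set.Icc (0:ℝ) 1, (⨅ i, |z - x i|) ≤ ⨅ i, |y - x i|) →
        ∀ i, 1 / (2 * n) ≤ |y - x i| := by
  intro n x hn hx y hy hopt i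
  haveI : Nonempty (Fin n) := ⟨⟨0, hn⟩⟩
  have hn0 : (0:ℝ) < n := by exact_mod_cast Nat.lt_of_lt_of_le Nat.zero_lt_one hn
  have hround : ∀ j : Fin n, 0 ≤ round ((n:ℝ) * x j) ∧ round ((n:ℝ) * x j) ≤ n := by
    intro j
    have h0 : (0:ℝ) ≤ (n:ℝ) * x j := mul_nonneg hn0.le (hx j).1
    have h1 : (n:ℝ) * x j ≤ n := by
      nlinarith [(hx j).2]
    rw [round_eq]
    constructor
    · rw [Int.floor_nonneg]; linarith
    · rw [Int.floor_le_iff]; push_cast; linarith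
  set g : Fin n → Fin (n+1) := fun j =>
    ⟨(round ((n:ℝ) * x j)).toNat, by
      have := (hround j).2
      omega⟩ with hg
  have hns : ¬ Function.Surjective g := by
    intro h
    have := Fintype.card_le_of_surjective g h
    simp at this
  rw [Function.Surjective] at hns
  push_neg at hns
  obtain ⟨k, hk⟩ := hns
  set z : ℝ := (k : ℝ) / n with hz
  have hzmem : z ∈ Set.Icc (0:ℝ) 1 := by
    constructor
    · positivity
    · rw [hz, div_le_one hn0]
      have : (k:ℕ) ≤ n := Nat.lt_succ_iff.mp k.isLt
      exact_mod_cast this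
  have hkey : ∀ j, 1/(2*(n:ℝ)) ≤ |z - x j| := by
    intro j
    by_contra h
    push_neg at h
    apply hk j
    have habs : |(n:ℝ) * x j - ((k:ℕ):ℤ)| < 1/2 := by
      have : |(n:ℝ) * x j - (k:ℕ)| = n * |z - x j| := by
        rw [← abs_of_pos hn0, ← abs_mul, abs_sub_comm]
        congr 1
        rw [abs_of_pos hn0, hz]; field_simp
      push_cast
      rw [this]
      calc (n:ℝ) * |z - x j| < n * (1/(2*n)) := by
            exact mul_lt_mul_of_pos_left h hn0
        _ = 1/2 := by field_simp
    have hr := round_eq_of_close habs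
    rw [hg]
    ext
    simp only []
    rw [hr]
    simp
  have h1 : 1/(2*(n:ℝ)) ≤ ⨅ j, |z - x j| := le_ciInf hkey
  have h2 : (⨅ j, |z - x j|) ≤ ⨅ j, |y - x j| := hopt z hzmem
  have h3 : (⨅ j, |y - x j|) ≤ |y - x i| :=
    ciInf_le ⟨0, fun a ⟨j, hj⟩ => hj ▸ abs_nonneg _⟩ i
  linarith
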